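/- With the eight-vertex weights defined from β > 0, m ≥ 1, J^z, η, κ, h (with ζ = √(η²+h²) > 0), one has the identity w₁w₂ + w₃w₄ − w₅w₆ − w₇w₈ = (e^{2βJ^z/m} − e^{−2βJ^z/m})·(1 + (η²/ζ²)·sinh²(βζ/m)); consequently the free-fermion condition w₁w₂ + w₃w₄ = w₅w₆ + w₇w₈ holds if and only if J^z = 0. -/

import Mathlib

/-- For the eight-vertex weights obtained from the Trotter decomposition of the
quantum spin chain, one has
`w₁w₂ + w₃w₄ − w₅w₆ − w₇w₈ = (e^{2βJᶻ/m} − e^{−2βJᶻ/m})(1 + (η²/ζ²) sinh²(βζ/m))`;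
consequently the free-fermion condition `w₁w₂ + w₃w₄ = w₅w₆ + w₇w₈` holds
if and only if `Jᶻ = 0`. -/
theorem free_fermion_condition (β : ℝ) (hβ : 0 < β) (m : ℕ) (hm : 1 ≤ m)
    (Jz η κ h : ℝ) (ζ : ℝ) (hζ : ζ = Real.sqrt (η ^ 2 + h ^ 2)) (hζpos : 0 < ζ)
    (w₁ w₂ w₃ w₄ w₅ w₆ w₇ w₈ : ℝ)
    (hw₁ : w₁ = Real.exp (β * Jz / m) *
      (Real.cosh (β * ζ / m) + (h / ζ) * Real.sinh (β * ζ / m)))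
    (hw₂ : w₂ = Real.exp (β * Jz / m) *
      (Real.cosh (β * ζ / m) - (h / ζ) * Real.sinh (β * ζ / m)))
    (hw₃ : w₃ = Real.exp (-(β * Jz / m)) * Real.sinh (β * κ / m))
    (hw₄ : w₄ = Real.exp (-(β * Jz / m)) * Real.sinh (β * κ / m))
    (hw₅ : w₅ = Real.exp (-(β * Jz / m)) * Real.cosh (β * κ / m))
    (hw₆ : w₆ = Real.exp (-(β * Jz / m)) * Real.cosh (β * κ / m))
    (hw₇ : w₇ = Real.exp (-(β * Jz / m)) * (η / ζ) * Real.sinh (β * ζ / m))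
    (hw₈ : w₈ = Real.exp (-(β * Jz / m)) * (η / ζ) * Real.sinh (β * ζ / m)) :
    (w₁ * w₂ + w₃ * w₄ - w₅ * w₆ - w₇ * w₈ =
      (Real.exp (2 * β * Jz / m) - Real.exp (-(2 * β * Jz / m))) *
        (1 + (η ^ 2 / ζ ^ 2) * Real.sinh (β * ζ / m) ^ 2)) ∧
    (w₁ * w₂ + w₃ * w₄ = w₅ * w₆ + w₇ * w₈ ↔ Jz = 0) := by
  have hζne : ζ ≠ 0 := ne_of_gt hζpos
  have hζ2 : ζ ^ 2 = η ^ 2 + h ^ 2 := by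
    rw [hζ]; exact Real.sq_sqrt (by positivity)
  have hmpos : (0 : ℝ) < m := by exact_mod_cast hm
  have he2 : Real.exp (2 * β * Jz / m) = Real.exp (β * Jz / m) ^ 2 := by
    rw [show 2 * β * Jz / m = β * Jz / m + β * Jz / m by ring, Real.exp_add, sq]
  have he2' : Real.exp (-(2 * β * Jz / m)) = Real.exp (-(β * Jz / m)) ^ 2 := by
    rw [show -(2 * β * Jz / m) = -(β * Jz / m) + -(β * Jz / m) by ring, Real.exp_add, sq]
  have hcs : Real.cosh (β * ζ / m) ^ 2 = Real.sinh (β * ζ / m) ^ 2 + 1 :=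
    Real.cosh_sq (β * ζ / m)
  have hcs' : Real.cosh (β * κ / m) ^ 2 = Real.sinh (β * κ / m) ^ 2 + 1 :=
    Real.cosh_sq (β * κ / m)
  have hee : Real.exp (β * Jz / m) * Real.exp (-(β * Jz / m)) = 1 := by
    rw [← Real.exp_add]; simp
  have key : w₁ * w₂ + w₃ * w₄ - w₅ * w₆ - w₇ * w₈ =
      (Real.exp (2 * β * Jz / m) - Real.exp (-(2 * β * Jz / m))) *
        (1 + (η ^ 2 / ζ ^ 2) * Real.sinh (β * ζ / m) ^ 2) := by
    subst hw₁ hw₂ hw₃ hw₄ hw₅ hw₆ hw₇ hw₈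
    rw [he2, he2']
    have hh2 : (h / ζ) ^ 2 = 1 - η ^ 2 / ζ ^ 2 := by
      field_simp
      linarith [hζ2]
    have hη2 : (η / ζ) ^ 2 = η ^ 2 / ζ ^ 2 := div_pow η ζ 2
    linear_combination Real.exp (β * Jz / m) ^ 2 * hcs
      - Real.exp (β * Jz / m) ^ 2 * Real.sinh (β * ζ / m) ^ 2 * hh2
      - Real.exp (-(β * Jz / m)) ^ 2 * hcs'
      - Real.exp (-(β * Jz / m)) ^ 2 * Real.sinh (β * ζ / m) ^ 2 * hη2
  refine ⟨key, ?_⟩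
  constructor
  · intro heq
    have hz : (Real.exp (2 * β * Jz / m) - Real.exp (-(2 * β * Jz / m))) *
        (1 + (η ^ 2 / ζ ^ 2) * Real.sinh (β * ζ / m) ^ 2) = 0 := by
      rw [← key]; linarith
    have hpos : 0 < 1 + (η ^ 2 / ζ ^ 2) * Real.sinh (β * ζ / m) ^ 2 := by positivity
    have h0 : Real.exp (2 * β * Jz / m) = Real.exp (-(2 * β * Jz / m)) := by
      rcases mul_eq_zero.mp hz with h1 | h1
      · linarith
      · linarith
    have h3 : 2 * β * Jz / m = -(2 * β * Jz / m) := Real.exp_injective h0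
    have : β * Jz = 0 := by
      have hm0 : (m : ℝ) ≠ 0 := ne_of_gt hmpos
      field_simp at h3
      rw [show Jz = 0 by linarith, mul_zero]
    rcases mul_eq_zero.mp this with h4 | h4
    · exact absurd h4 (ne_of_gt hβ)
    · exact h4
  · intro hJ
    subst hJ
    simp at key ⊢
    linarith [key]
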